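/- arXiv:1704.06845 — 2 statements merged into one kernel-verified Lean document; each statement's English description precedes it below -/
import Mathlib

section
/- Let W be a finite Coxeter group with generating set S. Then ∑_{w ∈ W} (-1)^{|w|} ∏_{s ∈ S_w} q_s = ∏_{s ∈ S} (1 − q_s). -/
variable {B W : Type*} [Group W] {M : CoxeterMatrix B}

/-- The (standard) parabolic subgroup generated by the simple reflections indexed by `T`. -/
def parabolic (cs : CoxeterSystem M W) (T : Set B) : Subgroup W :=
  Subgroup.closure (cs.simple '' T)

/-- The colour `S_w` of `w`: `s ∈ S_w` iff `w ∉ W_{S∖{s}}`. -/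
def colour (cs : CoxeterSystem M W) (w : W) : Set B :=
  {i | w ∉ parabolic cs {j | j ≠ i}}

set_option linter.unusedSectionVars false

open List

namespace StmtAux


section GroupAux

variable {G : Type*} [Group G]

theorem conj_mul_aux {b : G} (hb : b * b = 1) (x y : G) :
    (b * x * b) * (b * y * b) = b * (x * y) * b := by
  rw [(by group : (b * x * b) * (b * y * b) = b * x * (b * b) * y * b), hb]
  group

theorem conj_pow_aux {a b : G} (ha : a * a = 1) (hb : b * b = 1) (r : ℕ) :
    b * (a * b) ^ r * b = ((a * b) ^ r)⁻¹ := by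
  have ha' : a⁻¹ = a := by rw [inv_eq_iff_mul_eq_one, ha]
  have hb' : b⁻¹ = b := by rw [inv_eq_iff_mul_eq_one, hb]
  induction r with
  | zero => simpa using hb
  | succ n ih =>
    have h1 : b * (a * b) ^ (n + 1) * b = (b * (a * b) ^ n * b) * (b * (a * b) * b) := by
      rw [conj_mul_aux hb, pow_succ]
    have h2 : b * (a * b) * b = (a * b)⁻¹ := by
      rw [(by group : b * (a * b) * b = b * a * (b * b)), hb, mul_inv_rev, ha', hb']
      group
    rw [h1, ih, h2, pow_succ', mul_inv_rev, mul_inv_rev, mul_inv_rev]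

theorem conj_pow_aux' {a b : G} (ha : a * a = 1) (hb : b * b = 1) (r : ℕ) :
    b * ((a * b) ^ r)⁻¹ * b = (a * b) ^ r := by
  have hb' : b⁻¹ = b := by rw [inv_eq_iff_mul_eq_one, hb]
  have := congrArg (fun z => z⁻¹) (conj_pow_aux ha hb r)
  simp only [mul_inv_rev, inv_inv, hb'] at this
  rw [← mul_assoc] at this
  exact this

theorem swap_pow_aux {a b : G} (ha : a * a = 1) (hb : b * b = 1) (n : ℕ) :
    b * ((a * b) ^ n)⁻¹ = (a * b) ^ n * b := by
  have hb' : b⁻¹ = b := by rw [inv_eq_iff_mul_eq_one, hb]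
  have h := conj_pow_aux' ha hb n
  calc b * ((a * b) ^ n)⁻¹ = (b * ((a * b) ^ n)⁻¹ * b) * b⁻¹ := by group
  _ = (a * b) ^ n * b⁻¹ := by rw [h]
  _ = (a * b) ^ n * b := by rw [hb']

theorem braid_L1 {b P : G} (hswap : b * P⁻¹ = P * b) :
    P * ((P * P)⁻¹ * b) * P⁻¹ = b := by
  have h : P * ((P * P)⁻¹ * b) * P⁻¹ = P⁻¹ * (b * P⁻¹) := by group
  rw [h, hswap]
  group

theorem braid_L2 {a b x P : G} (ha : a * a = 1) (hb : b * b = 1)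
    (hx : x = a * b) (hswap : b * P⁻¹ = P * b) (hcomm : x * P = P * x) :
    b * (P * ((P * (P * x))⁻¹ * b) * P⁻¹) * b = a := by
  have ha' : a⁻¹ = a := by rw [inv_eq_iff_mul_eq_one, ha]
  have hb' : b⁻¹ = b := by rw [inv_eq_iff_mul_eq_one, hb]
  have hc : Commute x P := hcomm
  have hPx : P * x⁻¹ * P⁻¹ = x⁻¹ := by
    rw [← hc.inv_left.eq]
    group
  have e1 : P * ((P * (P * x))⁻¹ * b) * P⁻¹ = (P * x⁻¹ * P⁻¹) * (P⁻¹ * (b * P⁻¹)) := by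
    group
  rw [e1, hPx, hswap,
    (by group : x⁻¹ * (P⁻¹ * (P * b)) = x⁻¹ * b),
    hx, mul_inv_rev, ha', hb',
    (by group : b * (b * a * b) * b = b * b * a * (b * b)), hb, one_mul, mul_one]

theorem braid_L3 {a b P : G} (ha : a * a = 1) (hb : b * b = 1) {x : G}
    (hx : x = a * b) (t : G) :
    a * (b * (P * t * P⁻¹) * b) * a = (x * P) * t * ((x * P))⁻¹ := by
  have ha' : a⁻¹ = a := by rw [inv_eq_iff_mul_eq_one, ha]
  have hb' : b⁻¹ = b := by rw [inv_eq_iff_mul_eq_one, hb]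
  have e : (x * P) * t * ((x * P))⁻¹ = a * (b * (P * t * P⁻¹) * b⁻¹) * a⁻¹ := by
    rw [hx]; group
  rw [e, ha', hb']

end GroupAux

variable {B W : Type*} [Group W] {M : CoxeterMatrix B} (cs : CoxeterSystem M W)

local prefix:100 "s" => cs.simple
local prefix:100 "π" => cs.wordProd
local prefix:100 "ℓ" => cs.length
local prefix:100 "ris" => cs.rightInvSeq

noncomputable section

open Classical in
/-- The function underlying the sign permutation associated to a simple reflection. -/
def etaFun (i : B) : W × ℤˣ → W × ℤˣ :=
  fun x => (s i * x.1 * s i, if x.1 = s i then -x.2 else x.2)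

theorem etaFun_involutive (i : B) : Function.Involutive (etaFun cs i) := by
  intro ⟨t, ε⟩
  by_cases h : t = s i
  · subst h
    simp [etaFun]
  · have h2 : s i * t * s i ≠ s i := by
      intro hc
      apply h
      have := congrArg (fun z => s i * z * s i) hc
      simpa [← mul_assoc] using this
    simp [etaFun, h, h2, ← mul_assoc]

/-- The sign permutation associated to a simple reflection. -/
def eta (i : B) : Equiv.Perm (W × ℤˣ) := (etaFun_involutive cs i).toPerm

@[simp] theorem eta_apply (i : B) (x : W × ℤˣ) : eta cs i x = etaFun cs i x := rfl

theorem eta_liftable : M.IsLiftable (eta cs) := by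
  classical
  intro i j
  by_cases hij : i = j
  · subst hij
    rw [M.diagonal i, pow_one]
    apply Equiv.ext
    intro x
    rw [Equiv.Perm.mul_apply]
    exact (etaFun_involutive cs i) x
  · set m := M i j with hm
    have ha : s i * s i = 1 := cs.simple_mul_simple_self i
    have hb : s j * s j = 1 := cs.simple_mul_simple_self j
    set p : W := s i * s j with hp
    set T : ℕ → W := fun r => (p ^ r)⁻¹ * s j with hT
    have hswap : ∀ n : ℕ, s j * (p ^ n)⁻¹ = p ^ n * s j := fun n => swap_pow_aux ha hb n
    have hI1 : ∀ n : ℕ, p ^ n * T (2 * n) * (p ^ n)⁻¹ = s j := by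
      intro n
      show p ^ n * ((p ^ (2 * n))⁻¹ * s j) * (p ^ n)⁻¹ = s j
      rw [two_mul, pow_add]
      exact braid_L1 (hswap n)
    have hI2 : ∀ n : ℕ, s j * (p ^ n * T (2 * n + 1) * (p ^ n)⁻¹) * s j = s i := by
      intro n
      show s j * (p ^ n * ((p ^ (2 * n + 1))⁻¹ * s j) * (p ^ n)⁻¹) * s j = s i
      rw [(by ring : 2 * n + 1 = n + (n + 1)), pow_add, pow_succ]
      exact braid_L2 ha hb hp (hswap n) ((Commute.refl p).pow_right n).eq
    have key : ∀ (k : ℕ) (t : W) (ε : ℤˣ),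
        ((eta cs i * eta cs j) ^ k) (t, ε) =
          (p ^ k * t * (p ^ k)⁻¹,
            (∏ r ∈ Finset.range (2 * k), (if t = T r then (-1 : ℤˣ) else 1)) * ε) := by
      intro k
      induction k with
      | zero => intro t ε; simp
      | succ n ih =>
        intro t ε
        rw [pow_succ', Equiv.Perm.mul_apply, ih t ε, Equiv.Perm.mul_apply]
        have e1 : (p ^ n * t * (p ^ n)⁻¹ = s j) ↔ (t = T (2 * n)) := by
          constructor
          · intro h
            have h' := h.trans (hI1 n).symm
            exact mul_left_cancel (mul_right_cancel h')
          · intro h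
            rw [h]; exact hI1 n
        have e2 : (s j * (p ^ n * t * (p ^ n)⁻¹) * s j = s i) ↔ (t = T (2 * n + 1)) := by
          constructor
          · intro h
            have h' := h.trans (hI2 n).symm
            have h'' := mul_left_cancel (mul_right_cancel h')
            exact mul_left_cancel (mul_right_cancel h'')
          · intro h
            rw [h]; exact hI2 n
        have hco : s i * (s j * (p ^ n * t * (p ^ n)⁻¹) * s j) * s i
            = p ^ (n + 1) * t * (p ^ (n + 1))⁻¹ := by
          rw [pow_succ']
          exact braid_L3 ha hb hp t
        have hprod : (∏ r ∈ Finset.range (2 * (n + 1)), (if t = T r then (-1 : ℤˣ) else 1))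
            = (∏ r ∈ Finset.range (2 * n), (if t = T r then (-1 : ℤˣ) else 1))
              * (if t = T (2 * n) then (-1 : ℤˣ) else 1)
              * (if t = T (2 * n + 1) then (-1 : ℤˣ) else 1) := by
          rw [(by ring : 2 * (n + 1) = 2 * n + 1 + 1), Finset.prod_range_succ,
            Finset.prod_range_succ]
        simp only [eta_apply, etaFun]
        rw [hprod]
        by_cases hx : t = T (2 * n)
        · rw [if_pos (e1.mpr hx)]
          by_cases hy : t = T (2 * n + 1)
          · rw [if_pos (e2.mpr hy)]
            refine Prod.ext hco ?_
            simp only [if_pos hx, if_pos hy]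
            simp [mul_neg, neg_mul, neg_neg, mul_assoc]
          · rw [if_neg (fun hc => hy (e2.mp hc))]
            refine Prod.ext hco ?_
            simp only [if_pos hx, if_neg hy]
            simp [mul_neg, neg_mul, neg_neg, mul_assoc]
        · rw [if_neg (fun hc => hx (e1.mp hc))]
          by_cases hy : t = T (2 * n + 1)
          · rw [if_pos (e2.mpr hy)]
            refine Prod.ext hco ?_
            simp only [if_pos hy, if_neg hx]
            simp [mul_neg, neg_mul, neg_neg, mul_assoc]
          · rw [if_neg (fun hc => hy (e2.mp hc))]
            refine Prod.ext hco ?_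
            simp only [if_neg hy, if_neg hx]
            simp [mul_neg, neg_mul, neg_neg, mul_assoc]
    apply Equiv.ext
    intro x
    obtain ⟨t, ε⟩ := x
    rw [key m t ε]
    have hpm : p ^ m = 1 := cs.simple_mul_simple_pow i j
    have hTper : ∀ r : ℕ, T (m + r) = T r := by
      intro r
      show (p ^ (m + r))⁻¹ * s j = (p ^ r)⁻¹ * s j
      rw [pow_add, hpm, one_mul]
    have hsq : (∏ r ∈ Finset.range (2 * m), (if t = T r then (-1 : ℤˣ) else 1)) = 1 := by
      rw [two_mul, Finset.prod_range_add]
      have hper : ∀ r : ℕ, (if t = T (m + r) then (-1 : ℤˣ) else 1)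
          = (if t = T r then (-1 : ℤˣ) else 1) := by
        intro r; rw [hTper r]
      simp only [hper]
      rw [← sq, Int.units_sq]
    rw [hsq, hpm]
    simp


/-- The sign homomorphism into permutations of `W × ℤˣ`. -/
def Phi : W →* Equiv.Perm (W × ℤˣ) := cs.lift ⟨eta cs, eta_liftable cs⟩

@[simp] theorem Phi_simple (i : B) : Phi cs (s i) = eta cs i :=
  cs.lift_apply_simple (eta_liftable cs) i

open Classical in
/-- Product of sign flips of `t` along a list. -/
def flipSign (t : W) (l : List W) : ℤˣ :=
  (l.map (fun x => if t = x then (-1 : ℤˣ) else 1)).prod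

@[simp] theorem flipSign_nil (t : W) : flipSign t [] = 1 := rfl

open Classical in
theorem flipSign_cons (t x : W) (l : List W) :
    flipSign t (x :: l) =
      (if t = x then (-1 : ℤˣ) else 1) * flipSign t l := by
  simp [flipSign]

theorem flipSign_eq_one (t : W) (l : List W) (h : t ∉ l) : flipSign t l = 1 := by
  classical
  induction l with
  | nil => rfl
  | cons x l ih =>
    rw [flipSign_cons]
    have hx : t ≠ x := fun hc => h (hc ▸ mem_cons_self (a := x) (l := l))
    rw [if_neg hx, one_mul]
    exact ih (fun hc => h (mem_cons_of_mem x hc))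

theorem Phi_wordProd (ω : List B) (t : W) (ε : ℤˣ) :
    Phi cs (π ω) (t, ε) = (π ω * t * (π ω)⁻¹, flipSign t (ris ω) * ε) := by
  classical
  induction ω generalizing t ε with
  | nil => simp
  | cons i ω ih =>
    rw [cs.wordProd_cons, map_mul, Equiv.Perm.mul_apply, ih, Phi_simple, eta_apply, etaFun]
    have hcond : ((π ω) * t * (π ω)⁻¹ = s i) ↔ (t = (π ω)⁻¹ * s i * π ω) := by
      constructor
      · intro h; rw [← h]; group
      · intro h; rw [h]; group
    have hfst : s i * (π ω * t * (π ω)⁻¹) * s i = π (i :: ω) * t * (π (i :: ω))⁻¹ := by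
      rw [cs.wordProd_cons, mul_inv_rev, cs.inv_simple]
      group
    have hris : ris (i :: ω) = ((π ω)⁻¹ * s i * π ω) :: ris ω := rfl
    rw [hris, flipSign_cons]
    by_cases hc : t = (π ω)⁻¹ * s i * π ω
    · rw [if_pos (hcond.mpr hc)]
      refine Prod.ext hfst ?_
      rw [if_pos hc]
      simp [mul_assoc]
    · rw [if_neg (fun hcc => hc (hcond.mp hcc))]
      refine Prod.ext hfst ?_
      rw [if_neg hc, one_mul]

/-- The sign of `t` relative to `w`. -/
def nsign (w t : W) : ℤˣ := (Phi cs w (t, 1)).2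

theorem nsign_eq (ω : List B) (t : W) :
    nsign cs (π ω) t = flipSign t (ris ω) := by
  rw [nsign, Phi_wordProd, mul_one]

theorem Phi_apply (w t : W) (ε : ℤˣ) :
    Phi cs w (t, ε) = (w * t * w⁻¹, ε * nsign cs w t) := by
  obtain ⟨ω, rfl⟩ := cs.wordProd_surjective w
  rw [Phi_wordProd, nsign_eq]
  refine Prod.ext rfl ?_
  simp [mul_comm]

theorem isRightInversion_of_nsign (w t : W) (h : nsign cs w t = -1) :
    cs.IsRightInversion w t := by
  obtain ⟨ω, hred, rfl⟩ := cs.exists_reduced_word' w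
  rw [nsign_eq] at h
  by_cases hmem : t ∈ ris ω
  · exact cs.isRightInversion_of_mem_rightInvSeq hred hmem
  · rw [flipSign_eq_one t _ hmem] at h
    exact absurd h (by decide)

theorem Phi_reflection_apply (υ : List B) (i : B) (ε : ℤˣ) :
    Phi cs (π υ * s i * (π υ)⁻¹) ((π υ * s i * (π υ)⁻¹), ε)
      = (π υ * s i * (π υ)⁻¹, -ε) := by
  classical
  induction υ generalizing ε with
  | nil =>
    simp only [cs.wordProd_nil, one_mul, inv_one, mul_one]
    rw [Phi_simple]
    simp [etaFun]
  | cons l υ ih =>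
    set t' : W := π υ * s i * (π υ)⁻¹ with ht'
    have ht : π (l :: υ) * s i * (π (l :: υ))⁻¹ = s l * t' * s l := by
      rw [ht', cs.wordProd_cons, mul_inv_rev, cs.inv_simple]
      group
    rw [ht, map_mul, map_mul, Phi_simple, Equiv.Perm.mul_apply, Equiv.Perm.mul_apply]
    have h1 : (eta cs l) ((s l * t' * s l, ε) : W × ℤˣ)
        = (t', if s l * t' * s l = s l then -ε else ε) := by
      rw [eta_apply, etaFun]
      refine Prod.ext ?_ rfl
      simp [← mul_assoc]
    rw [h1]
    have h2 : ∀ δ : ℤˣ, Phi cs t' ((t', δ) : W × ℤˣ) = (t', -δ) := fun δ => ih δ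
    rw [h2]
    rw [eta_apply, etaFun]
    dsimp only
    have hcond : (s l * t' * s l = s l) ↔ (t' = s l) := by
      constructor
      · intro h
        have := congrArg (fun z => s l * z * s l) h
        simpa [← mul_assoc] using this
      · intro h; rw [h]; simp [← mul_assoc]
    by_cases hc : t' = s l
    · refine Prod.ext rfl ?_
      dsimp only
      rw [if_pos hc, if_pos (hcond.mpr hc)]
      simp
    · refine Prod.ext rfl ?_
      dsimp only
      rw [if_neg hc, if_neg (fun hcc => hc (hcond.mp hcc))]

theorem nsign_reflection {t : W} (h : cs.IsReflection t) : nsign cs t t = -1 := by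
  obtain ⟨w, i, rfl⟩ := h
  obtain ⟨υ, rfl⟩ := cs.wordProd_surjective w
  rw [nsign, Phi_reflection_apply]

theorem nsign_of_isRightInversion {w t : W} (h : cs.IsRightInversion w t) :
    nsign cs w t = -1 := by
  rcases Int.units_eq_one_or (nsign cs w t) with h1 | h1
  · exfalso
    have href := h.1
    have hsq : t * t = 1 := href.mul_self
    have hmul : nsign cs (w * t) t = -1 := by
      rw [nsign, map_mul, Equiv.Perm.mul_apply]
      have : Phi cs t ((t, 1) : W × ℤˣ) = (t, -1) := by
        rw [Phi_apply, one_mul, nsign_reflection cs href]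
        refine Prod.ext ?_ rfl
        rw [mul_assoc, mul_inv_cancel, mul_one]
      rw [this, Phi_apply]
      simp [h1]
    have hinv := isRightInversion_of_nsign cs _ _ hmul
    have h2 := hinv.2
    rw [mul_assoc, hsq, mul_one] at h2
    exact lt_asymm h.2 h2
  · exact h1

theorem exists_of_mem_rightInvSeq (ω : List B) {x : W} (h : x ∈ ris ω) :
    ∃ (l : B) (υ : List B), l ∈ ω ∧ (∀ a ∈ υ, a ∈ ω) ∧ x = (π υ)⁻¹ * s l * π υ := by
  induction ω with
  | nil => simp [cs.rightInvSeq_nil] at h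
  | cons i ω ih =>
    have hris : ris (i :: ω) = ((π ω)⁻¹ * s i * π ω) :: ris ω := rfl
    rw [hris] at h
    rcases List.mem_cons.mp h with h1 | h1
    · exact ⟨i, ω, mem_cons_self (a := i) (l := ω), fun a ha => mem_cons_of_mem i ha, h1⟩
    · obtain ⟨l, υ, hl, hυ, hx⟩ := ih h1
      exact ⟨l, υ, mem_cons_of_mem i hl, fun a ha => mem_cons_of_mem i (hυ a ha), hx⟩


end

section Geometric


variable {B : Type*} (M : CoxeterMatrix B)

noncomputable section

/-- Cosine matrix entries of the geometric representation. -/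
def cM (i j : B) : ℝ := - Real.cos (Real.pi / (M i j : ℝ))

theorem cM_diag (i : B) : cM M i i = 1 := by
  rw [cM, M.diagonal i]
  norm_num

theorem cM_symm (i j : B) : cM M i j = cM M j i := by
  rw [cM, cM, M.symmetric i j]

open Classical in
/-- Standard basis vector. -/
def geomE (i : B) : B → ℝ := fun k => if k = i then 1 else 0

@[simp] theorem geomE_self (i : B) : geomE i i = 1 := by simp [geomE]

theorem geomE_ne {i k : B} (h : k ≠ i) : geomE i k = 0 := by simp [geomE, h]

variable [Fintype B]

/-- The linear functional of the geometric representation. -/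
def phiF (i : B) (v : B → ℝ) : ℝ := ∑ k, cM M i k * v k

theorem phiF_geomE (x i : B) : phiF M x (geomE i) = cM M x i := by
  classical
  rw [phiF]
  rw [Finset.sum_eq_single i]
  · simp [geomE]
  · intro k _ hk
    simp [geomE_ne hk]
  · intro h
    exact absurd (Finset.mem_univ i) h

theorem phiF_comb (x i j : B) (a b : ℝ) (w : B → ℝ) :
    phiF M x (fun k => a * geomE i k + b * geomE j k + w k)
      = a * cM M x i + b * cM M x j + phiF M x w := by
  classical
  rw [phiF]
  simp only [mul_add]
  rw [Finset.sum_add_distrib, Finset.sum_add_distrib]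
  have h1 : ∑ k, cM M x k * (a * geomE i k) = a * cM M x i := by
    rw [Finset.sum_eq_single i]
    · simp [geomE]; ring
    · intro k _ hk; simp [geomE_ne hk]
    · intro h; exact absurd (Finset.mem_univ i) h
  have h2 : ∑ k, cM M x k * (b * geomE j k) = b * cM M x j := by
    rw [Finset.sum_eq_single j]
    · simp [geomE]; ring
    · intro k _ hk; simp [geomE_ne hk]
    · intro h; exact absurd (Finset.mem_univ j) h
  rw [h1, h2, phiF]

theorem phiF_sub_smul (x i : B) (cst : ℝ) (v : B → ℝ) :
    phiF M x (fun k => v k - cst * geomE i k) = phiF M x v - cst * cM M x i := by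
  classical
  rw [phiF, phiF]
  simp only [mul_sub]
  rw [Finset.sum_sub_distrib]
  congr 1
  rw [Finset.sum_eq_single i]
  · simp [geomE]; ring
  · intro k _ hk; simp [geomE_ne hk]
  · intro h; exact absurd (Finset.mem_univ i) h

/-- The reflection of the geometric representation, as an endofunction. -/
def sigmaF (i : B) : Function.End (B → ℝ) :=
  fun v => fun k => v k - 2 * phiF M i v * geomE i k

theorem sigmaF_coord (i : B) (v : B → ℝ) {k : B} (h : k ≠ i) :
    sigmaF M i v k = v k := by
  rw [sigmaF]
  simp [geomE_ne h]

theorem sigmaF_sq (i : B) : sigmaF M i * sigmaF M i = 1 := by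
  funext v
  show sigmaF M i (sigmaF M i v) = v
  have hphi : phiF M i (sigmaF M i v) = - phiF M i v := by
    show phiF M i (fun k => v k - 2 * phiF M i v * geomE i k) = - phiF M i v
    rw [phiF_sub_smul M i i (2 * phiF M i v) v, cM_diag]
    ring
  funext k
  show sigmaF M i v k - 2 * phiF M i (sigmaF M i v) * geomE i k = v k
  rw [hphi]
  show v k - 2 * phiF M i v * geomE i k - 2 * -phiF M i v * geomE i k = v k
  ring

/-- The two-dimensional rotation dynamics. -/
def tauP (c : ℝ) : ℝ × ℝ → ℝ × ℝ :=
  fun p => ((4 * c ^ 2 - 1) * p.1 - 2 * c * p.2, 2 * c * p.1 - p.2)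

/-- Identification of the plane with `ℂ`. -/
def psiC (θ : ℝ) (p : ℝ × ℝ) : ℂ :=
  ⟨p.2 * Real.sin θ, p.1 - p.2 * Real.cos θ⟩

theorem psiC_inj {θ : ℝ} (hs : Real.sin θ ≠ 0) {p p' : ℝ × ℝ}
    (h : psiC θ p = psiC θ p') : p = p' := by
  have hre := congrArg Complex.re h
  have him := congrArg Complex.im h
  simp only [psiC] at hre him
  have h2 : p.2 = p'.2 := by
    field_simp at hre
    exact hre
  have h1 : p.1 = p'.1 := by
    rw [h2] at him
    linarith
  exact Prod.ext h1 h2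

theorem psiC_tauP (θ : ℝ) (p : ℝ × ℝ) :
    psiC θ (tauP (Real.cos θ) p) = (⟨Real.cos (2 * θ), - Real.sin (2 * θ)⟩ : ℂ) * psiC θ p := by
  have hsq : Real.sin θ ^ 2 = 1 - Real.cos θ ^ 2 := Real.sin_sq θ
  apply Complex.ext
  · simp only [psiC, tauP, Complex.mul_re, Real.cos_two_mul, Real.sin_two_mul]
    ring
  · simp only [psiC, tauP, Complex.mul_im, Real.cos_two_mul, Real.sin_two_mul]
    linear_combination (2 * Real.cos θ * p.2) * hsq

theorem zeta_pow (m : ℕ) (hm : m ≠ 0) :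
    ((⟨Real.cos (2 * (Real.pi / m)), - Real.sin (2 * (Real.pi / m))⟩ : ℂ)) ^ m = 1 := by
  set θ : ℝ := Real.pi / m with hθ
  have hzeta : (⟨Real.cos (2 * θ), - Real.sin (2 * θ)⟩ : ℂ)
      = Complex.exp ((- (2 * θ) : ℝ) * Complex.I) := by
    apply Complex.ext
    · rw [Complex.exp_ofReal_mul_I_re, Real.cos_neg]
    · rw [Complex.exp_ofReal_mul_I_im, Real.sin_neg]
  rw [hzeta, ← Complex.exp_nat_mul]
  have hm0 : (m : ℝ) ≠ 0 := Nat.cast_ne_zero.mpr hm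
  have hmθ : (m : ℝ) * (2 * θ) = 2 * Real.pi := by
    rw [hθ]
    field_simp
  have hr : (m : ℝ) * (-(2 * θ)) = -(2 * Real.pi) := by rw [mul_neg, hmθ]
  have harg : (m : ℂ) * ((- (2 * θ) : ℝ) * Complex.I) = -(2 * Real.pi * Complex.I) := by
    calc (m : ℂ) * (((- (2 * θ) : ℝ) : ℂ) * Complex.I)
        = (((m : ℝ) * (-(2 * θ)) : ℝ) : ℂ) * Complex.I := by push_cast; ring
    _ = -(2 * Real.pi * Complex.I) := by rw [hr]; push_cast; ring
  rw [harg, Complex.exp_neg, Complex.exp_two_pi_mul_I, inv_one]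

theorem tauP_iterate (m : ℕ) (hm : 2 ≤ m) (p : ℝ × ℝ) :
    (tauP (Real.cos (Real.pi / m)))^[m] p = p := by
  set θ : ℝ := Real.pi / m with hθ
  have hθpos : 0 < θ := by
    rw [hθ]
    apply div_pos Real.pi_pos
    exact_mod_cast Nat.pos_of_ne_zero (by omega)
  have hθlt : θ < Real.pi := by
    have h2 : θ ≤ Real.pi / 2 := by
      rw [hθ]
      apply div_le_div_of_nonneg_left Real.pi_pos.le (by norm_num)
      exact_mod_cast hm
    exact lt_of_le_of_lt h2 (half_lt_self Real.pi_pos)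
  have hs : Real.sin θ ≠ 0 := ne_of_gt (Real.sin_pos_of_pos_of_lt_pi hθpos hθlt)
  have hiter : ∀ k : ℕ, psiC θ ((tauP (Real.cos θ))^[k] p)
      = (⟨Real.cos (2 * θ), - Real.sin (2 * θ)⟩ : ℂ) ^ k * psiC θ p := by
    intro k
    induction k with
    | zero => simp
    | succ n ih =>
      rw [Function.iterate_succ_apply', psiC_tauP, ih, pow_succ]
      ring
  apply psiC_inj hs
  rw [hiter m, zeta_pow m (by omega), one_mul]

theorem sigmaF_comb_i (i j : B) (a b : ℝ) (w : B → ℝ) (hwi : phiF M i w = 0) :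
    sigmaF M i (fun k => a * geomE i k + b * geomE j k + w k)
      = fun k => (-a - 2 * cM M i j * b) * geomE i k + b * geomE j k + w k := by
  have hphi : phiF M i (fun k => a * geomE i k + b * geomE j k + w k)
      = a + cM M i j * b := by
    rw [phiF_comb, cM_diag, hwi]
    ring
  funext k
  show (fun k => a * geomE i k + b * geomE j k + w k) k
      - 2 * phiF M i (fun k => a * geomE i k + b * geomE j k + w k) * geomE i k
      = (-a - 2 * cM M i j * b) * geomE i k + b * geomE j k + w k
  rw [hphi]
  ring

theorem sigmaF_comb_j (i j : B) (a b : ℝ) (w : B → ℝ) (hwj : phiF M j w = 0) :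
    sigmaF M j (fun k => a * geomE i k + b * geomE j k + w k)
      = fun k => a * geomE i k + (-b - 2 * cM M j i * a) * geomE j k + w k := by
  have hphi : phiF M j (fun k => a * geomE i k + b * geomE j k + w k)
      = cM M j i * a + b := by
    rw [phiF_comb, cM_diag, hwj]
    ring
  funext k
  show (fun k => a * geomE i k + b * geomE j k + w k) k
      - 2 * phiF M j (fun k => a * geomE i k + b * geomE j k + w k) * geomE j k
      = a * geomE i k + (-b - 2 * cM M j i * a) * geomE j k + w k
  rw [hphi]
  ring

theorem sigma_pair_pow (i j : B) (cθ : ℝ) (hcij : cM M i j = -cθ) (hcji : cM M j i = -cθ) :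
    ∀ (k : ℕ) (a b : ℝ) (w : B → ℝ), phiF M i w = 0 → phiF M j w = 0 →
      ((sigmaF M i * sigmaF M j) ^ k) (fun t => a * geomE i t + b * geomE j t + w t)
        = fun t => ((tauP cθ)^[k] (a, b)).1 * geomE i t
            + ((tauP cθ)^[k] (a, b)).2 * geomE j t + w t := by
  intro k
  induction k with
  | zero => intro a b w _ _; rfl
  | succ n ih =>
    intro a b w hwi hwj
    have hstep : (sigmaF M i * sigmaF M j) (fun t => a * geomE i t + b * geomE j t + w t)
        = fun t => (tauP cθ (a, b)).1 * geomE i t + (tauP cθ (a, b)).2 * geomE j t + w t := by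
      show sigmaF M i (sigmaF M j (fun t => a * geomE i t + b * geomE j t + w t))
        = _
      rw [sigmaF_comb_j M i j a b w hwj, sigmaF_comb_i M i j a (-b - 2 * cM M j i * a) w hwi]
      have h1 : (-a - 2 * cM M i j * (-b - 2 * cM M j i * a)) = (tauP cθ (a, b)).1 := by
        rw [hcij, hcji, tauP]
        ring
      have h2 : (-b - 2 * cM M j i * a) = (tauP cθ (a, b)).2 := by
        rw [hcji, tauP]
        ring
      rw [h1, h2]
    have hpow : ((sigmaF M i * sigmaF M j) ^ (n + 1))
          (fun t => a * geomE i t + b * geomE j t + w t)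
        = ((sigmaF M i * sigmaF M j) ^ n)
          ((sigmaF M i * sigmaF M j) (fun t => a * geomE i t + b * geomE j t + w t)) := by
      rw [pow_succ]
      rfl
    rw [hpow, hstep, ih (tauP cθ (a, b)).1 (tauP cθ (a, b)).2 w hwi hwj]
    funext t
    rw [Function.iterate_succ_apply]

theorem sigmaF_liftable : M.IsLiftable (sigmaF M) := by
  intro i j
  by_cases hij : i = j
  · subst hij
    rw [M.diagonal i, pow_one]
    exact sigmaF_sq M i
  · by_cases hm0 : M i j = 0
    · rw [hm0, pow_zero]
    · have hm1 : M i j ≠ 1 := M.off_diagonal i j hij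
      have hm2 : 2 ≤ M i j := by omega
      obtain ⟨m, hm⟩ : ∃ m : ℕ, M i j = m := ⟨_, rfl⟩
      rw [hm] at hm0 hm1 hm2
      obtain ⟨θ, hθ⟩ : ∃ θ : ℝ, θ = Real.pi / m := ⟨_, rfl⟩
      have hθpos : 0 < θ := by
        rw [hθ]
        apply div_pos Real.pi_pos
        exact_mod_cast Nat.pos_of_ne_zero hm0
      have hθlt : θ < Real.pi := by
        have h2 : θ ≤ Real.pi / 2 := by
          rw [hθ]
          apply div_le_div_of_nonneg_left Real.pi_pos.le (by norm_num)
          exact_mod_cast hm2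
        exact lt_of_le_of_lt h2 (half_lt_self Real.pi_pos)
      have hs : Real.sin θ ≠ 0 := ne_of_gt (Real.sin_pos_of_pos_of_lt_pi hθpos hθlt)
      have hcij : cM M i j = -Real.cos θ := by rw [cM, hθ, hm]
      have hcji : cM M j i = -Real.cos θ := by rw [← cM_symm, hcij]
      have hssq : Real.sin θ ^ 2 = 1 - Real.cos θ ^ 2 := Real.sin_sq θ
      rw [hm]
      funext v
      show ((sigmaF M i * sigmaF M j) ^ m) v = v
      obtain ⟨fa, hfa⟩ : ∃ fa : ℝ,
          fa = (phiF M i v + Real.cos θ * phiF M j v) / (Real.sin θ ^ 2) := ⟨_, rfl⟩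
      obtain ⟨fb, hfb⟩ : ∃ fb : ℝ,
          fb = (phiF M j v + Real.cos θ * phiF M i v) / (Real.sin θ ^ 2) := ⟨_, rfl⟩
      obtain ⟨w, hw⟩ : ∃ w : B → ℝ,
          w = fun k => v k - fa * geomE i k - fb * geomE j k := ⟨_, rfl⟩
      have hfa1 : fa - Real.cos θ * fb = phiF M i v := by
        rw [hfa, hfb]
        field_simp
        linear_combination (-(phiF M i v)) * hssq
      have hfb1 : fb - Real.cos θ * fa = phiF M j v := by
        rw [hfa, hfb]
        field_simp
        linear_combination (-(phiF M j v)) * hssq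
      have hwi : phiF M i w = 0 := by
        rw [hw]
        have : (fun k => v k - fa * geomE i k - fb * geomE j k)
            = fun k => (v k - fa * geomE i k) - fb * geomE j k := rfl
        rw [this, phiF_sub_smul M i j fb (fun k => v k - fa * geomE i k),
          phiF_sub_smul M i i fa v, cM_diag, hcij]
        rw [(by ring : phiF M i v - fa * 1 - fb * -Real.cos θ
          = phiF M i v - (fa - Real.cos θ * fb))]
        rw [hfa1]
        ring
      have hwj : phiF M j w = 0 := by
        rw [hw]
        have : (fun k => v k - fa * geomE i k - fb * geomE j k)
            = fun k => (v k - fa * geomE i k) - fb * geomE j k := rfl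
        rw [this, phiF_sub_smul M j j fb (fun k => v k - fa * geomE i k),
          phiF_sub_smul M j i fa v, cM_diag, hcji]
        rw [(by ring : phiF M j v - fa * -Real.cos θ - fb * 1
          = phiF M j v - (fb - Real.cos θ * fa))]
        rw [hfb1]
        ring
      have hv : v = fun t => fa * geomE i t + fb * geomE j t + w t := by
        funext t
        rw [hw]
        ring
      rw [hv, sigma_pair_pow M i j (Real.cos θ) hcij hcji m fa fb w hwi hwj]
      have hiter : (tauP (Real.cos θ))^[m] (fa, fb) = (fa, fb) := by
        rw [hθ]
        exact tauP_iterate m hm2 (fa, fb)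
      rw [hiter]

end
end Geometric


section Assembly

variable {B W : Type*} [Group W] {M : CoxeterMatrix B} (cs : CoxeterSystem M W)

local prefix:100 "s" => cs.simple
local prefix:100 "π" => cs.wordProd
local prefix:100 "ℓ" => cs.length
local prefix:100 "ris" => cs.rightInvSeq

noncomputable section

variable [Fintype B]

/-- The geometric representation of the Coxeter group. -/
def rho : W →* Function.End (B → ℝ) := cs.lift ⟨sigmaF M, sigmaF_liftable M⟩

@[simp] theorem rho_simple (i : B) : rho cs (s i) = sigmaF M i :=
  cs.lift_apply_simple (sigmaF_liftable M) i

theorem rho_word_coord (ω : List B) (i : B) (h : i ∉ ω) (v : B → ℝ) :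
    (rho cs (π ω)) v i = v i := by
  induction ω generalizing v with
  | nil =>
    rw [cs.wordProd_nil, map_one]
    rfl
  | cons l ω ih =>
    have hstep : (rho cs (π (l :: ω))) v = sigmaF M l ((rho cs (π ω)) v) := by
      rw [cs.wordProd_cons, map_mul, rho_simple]
      rfl
    rw [hstep, sigmaF_coord M l _ (fun hc : i = l => h (hc ▸ List.mem_cons_self (a := l) (l := ω)))]
    exact ih (fun hc => h (List.mem_cons_of_mem l hc)) v

theorem simple_ne_conj (i l : B) (υ : List B) (hl : l ≠ i) (hυ : ∀ a ∈ υ, a ≠ i) :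
    s i ≠ (π υ)⁻¹ * s l * π υ := by
  intro h
  have hiυ : i ∉ υ := fun hc => (hυ i hc) rfl
  have h1 : (rho cs (s i)) (geomE i) i = -1 := by
    rw [rho_simple]
    show geomE i i - 2 * phiF M i (geomE i) * geomE i i = -1
    rw [phiF_geomE, cM_diag, geomE_self]
    ring
  have h2 : (rho cs ((π υ)⁻¹ * s l * π υ)) (geomE i) i = 1 := by
    rw [map_mul, map_mul]
    show (rho cs ((π υ)⁻¹)) ((rho cs (s l)) ((rho cs (π υ)) (geomE i))) i = 1
    have hx : ((rho cs (π υ)) (geomE i)) i = 1 := by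
      rw [rho_word_coord cs υ i hiυ, geomE_self]
    have hy : ((rho cs (s l)) ((rho cs (π υ)) (geomE i))) i
        = ((rho cs (π υ)) (geomE i)) i := by
      rw [rho_simple]
      exact sigmaF_coord M l _ (fun hc : i = l => hl hc.symm)
    have hrev : rho cs ((π υ)⁻¹) = rho cs (π υ.reverse) := by
      rw [cs.wordProd_reverse]
    rw [hrev, rho_word_coord cs υ.reverse i (by simpa using hiυ), hy, hx]
  rw [h, h2] at h1
  norm_num at h1

end

theorem mem_parabolic_iff (A : Set B) (w : W) :
    w ∈ parabolic cs A ↔ ∃ ω : List B, (∀ l ∈ ω, l ∈ A) ∧ w = π ω := by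
  constructor
  · intro h
    refine Subgroup.closure_induction ?_ ?_ ?_ ?_ h
    · rintro x ⟨i, hi, rfl⟩
      exact ⟨[i], by simpa using hi, (cs.wordProd_singleton i).symm⟩
    · exact ⟨[], by simp, (cs.wordProd_nil).symm⟩
    · rintro x y hx hy ⟨ω1, h1, rfl⟩ ⟨ω2, h2, rfl⟩
      refine ⟨ω1 ++ ω2, ?_, (cs.wordProd_append ω1 ω2).symm⟩
      intro a ha
      rcases List.mem_append.mp ha with ha | ha
      · exact h1 a ha
      · exact h2 a ha
    · rintro x hx ⟨ω, h1, rfl⟩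
      exact ⟨ω.reverse, fun a ha => h1 a (by simpa using ha), (cs.wordProd_reverse ω).symm⟩
  · rintro ⟨ω, hω, rfl⟩
    induction ω with
    | nil =>
      rw [cs.wordProd_nil]
      exact Subgroup.one_mem _
    | cons l ω ih =>
      rw [cs.wordProd_cons]
      refine Subgroup.mul_mem _ ?_ (ih (fun a ha => hω a (List.mem_cons_of_mem l ha)))
      exact Subgroup.subset_closure ⟨l, hω l (List.mem_cons_self (a := l) (l := ω)), rfl⟩

theorem eq_one_of_forall_parabolic [Fintype B] {w : W}
    (h : ∀ i : B, w ∈ parabolic cs {j | j ≠ i}) : w = 1 := by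
  by_contra hne
  obtain ⟨i, hdesc⟩ := cs.exists_rightDescent_of_ne_one hne
  have hinv : cs.IsRightInversion w (s i) := ⟨cs.isReflection_simple i, hdesc⟩
  have hns := nsign_of_isRightInversion cs hinv
  obtain ⟨ω, hlet, hw⟩ := (mem_parabolic_iff cs _ w).mp (h i)
  subst hw
  rw [nsign_eq] at hns
  have hmem : s i ∈ ris ω := by
    by_contra hmem
    rw [flipSign_eq_one _ _ hmem] at hns
    exact absurd hns (by decide)
  obtain ⟨l, υ, hlω, hυω, heq⟩ := exists_of_mem_rightInvSeq cs ω hmem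
  have hli : l ≠ i := hlet l hlω
  have hυi : ∀ a ∈ υ, a ≠ i := fun a ha => hlet a (hυω a ha)
  exact simple_ne_conj cs i l υ hli hυi heq

end Assembly

end StmtAux

open StmtAux in
/-- For a finite Coxeter group `W`,
`∑_{w ∈ W} (-1)^{|w|} ∏_{s ∈ S_w} q_s = ∏_{s ∈ S} (1 − q_s)`. -/
theorem stmt_14 [Fintype B] [Fintype W] (cs : CoxeterSystem M W) (q : B → ℝ) :
    ∑ w : W, (-1 : ℝ) ^ cs.length w * ∏ᶠ i ∈ colour cs w, q i =
      ∏ i : B, (1 - q i) := by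
  classical
  have hfin : ∀ w : W, (colour cs w).Finite := fun w => Set.toFinite _
  -- the coloured finset of `w`
  set Cw : W → Finset B := fun w => (hfin w).toFinset with hCw
  -- subset condition via parabolics
  have hsub : ∀ (w : W) (T : Finset B),
      Cw w ⊆ T ↔ ∀ i ∉ T, w ∈ parabolic cs {j | j ≠ i} := by
    intro w T
    constructor
    · intro hs i hiT
      by_contra hw
      exact hiT (hs ((hfin w).mem_toFinset.mpr hw))
    · intro hp i hi
      rw [(hfin w).mem_toFinset] at hi
      by_contra hiT
      exact hi (hp i hiT)
  -- expansion of a monomial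
  have key : ∀ C : Finset B, (∏ i ∈ C, q i)
      = ∑ T : Finset B,
          (if C ⊆ T then (∏ i ∈ T, q i) * (∏ i ∈ Finset.univ \ T, (1 - q i)) else 0) := by
    intro C
    have h1 : ∀ i : B, (q i + (if i ∈ C then 0 else 1 - q i)) = if i ∈ C then q i else 1 := by
      intro i
      split <;> ring
    have h2 : ∏ i ∈ Finset.univ, (q i + (if i ∈ C then 0 else 1 - q i)) = ∏ i ∈ C, q i := by
      rw [Finset.prod_congr rfl (fun i _ => h1 i), Finset.prod_ite_mem, Finset.univ_inter]
    rw [← h2, Finset.prod_add, Finset.powerset_univ]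
    apply Finset.sum_congr rfl
    intro T _
    by_cases hCT : C ⊆ T
    · rw [if_pos hCT]
      congr 1
      apply Finset.prod_congr rfl
      intro i hi
      rw [Finset.mem_sdiff] at hi
      rw [if_neg (fun hc => hi.2 (hCT hc))]
    · rw [if_neg hCT]
      obtain ⟨i0, hi0C, hi0T⟩ := Finset.not_subset.mp hCT
      apply mul_eq_zero_of_right
      apply Finset.prod_eq_zero (Finset.mem_sdiff.mpr ⟨Finset.mem_univ i0, hi0T⟩)
      rw [if_pos hi0C]
  -- the inner alternating sums
  have inner : ∀ T : Finset B,
      (∑ w : W, (if Cw w ⊆ T then ((-1 : ℝ)) ^ cs.length w else 0))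
        = if T = ∅ then 1 else 0 := by
    intro T
    by_cases hT : T = ∅
    · subst hT
      rw [if_pos rfl]
      have hcond : ∀ w : W, (Cw w ⊆ (∅ : Finset B)) ↔ w = 1 := by
        intro w
        rw [hsub w ∅]
        constructor
        · intro hp
          exact eq_one_of_forall_parabolic cs (fun i => hp i (Finset.notMem_empty i))
        · rintro rfl i _
          exact Subgroup.one_mem _
      have : ∀ w : W, (if Cw w ⊆ (∅ : Finset B) then ((-1 : ℝ)) ^ cs.length w else 0)
          = if w = 1 then ((-1 : ℝ)) ^ cs.length w else 0 := by
        intro w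
        by_cases hw : w = 1
        · rw [if_pos ((hcond w).mpr hw), if_pos hw]
        · rw [if_neg (fun hc => hw ((hcond w).mp hc)), if_neg hw]
      rw [Finset.sum_congr rfl (fun w _ => this w), Finset.sum_ite_eq' Finset.univ (1 : W)]
      rw [if_pos (Finset.mem_univ 1), cs.length_one, pow_zero]
    · rw [if_neg hT]
      obtain ⟨i0, hi0⟩ := Finset.nonempty_iff_ne_empty.mpr hT
      -- the subset condition is invariant under right multiplication by s i0
      have hclose : ∀ w : W, (Cw (w * cs.simple i0) ⊆ T ↔ Cw w ⊆ T) := by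
        have haux : ∀ w : W, Cw w ⊆ T → Cw (w * cs.simple i0) ⊆ T := by
          intro w hw
          rw [hsub] at hw ⊢
          intro i hiT
          have hi0i : i0 ∈ {j | j ≠ i} := fun hc => hiT (hc ▸ hi0)
          exact Subgroup.mul_mem _ (hw i hiT)
            (Subgroup.subset_closure ⟨i0, hi0i, rfl⟩)
        intro w
        constructor
        · intro h
          have := haux (w * cs.simple i0) h
          rwa [cs.simple_mul_simple_cancel_right] at this
        · exact haux w
      apply Finset.sum_ninvolution (g := fun w => w * cs.simple i0)
      · intro w
        by_cases hc : Cw w ⊆ T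
        · rw [if_pos hc, if_pos ((hclose w).mpr hc)]
          rcases cs.length_mul_simple w i0 with h | h
          · rw [h, pow_succ]
            ring
          · rw [← h, pow_succ]
            ring
        · rw [if_neg hc, if_neg (fun hcc => hc ((hclose w).mp hcc))]
          ring
      · intro w _ hc
        have h1 : cs.simple i0 = 1 := mul_eq_left.mp hc
        have h2 := cs.length_simple i0
        rw [h1, cs.length_one] at h2
        exact absurd h2 (by norm_num)
      · intro w
        exact Finset.mem_univ _
      · intro w
        exact cs.simple_mul_simple_cancel_right i0
  -- assembling everything
  calc ∑ w : W, (-1 : ℝ) ^ cs.length w * ∏ᶠ i ∈ colour cs w, q i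
      = ∑ w : W, (-1 : ℝ) ^ cs.length w * ∏ i ∈ Cw w, q i := by
        apply Finset.sum_congr rfl
        intro w _
        rw [finprod_mem_eq_finite_toFinset_prod q (hfin w)]
    _ = ∑ w : W, ∑ T : Finset B, (if Cw w ⊆ T then
          ((-1 : ℝ) ^ cs.length w) * ((∏ i ∈ T, q i) * (∏ i ∈ Finset.univ \ T, (1 - q i)))
          else 0) := by
        apply Finset.sum_congr rfl
        intro w _
        rw [key (Cw w), Finset.mul_sum]
        apply Finset.sum_congr rfl
        intro T _
        by_cases hc : Cw w ⊆ T
        · rw [if_pos hc, if_pos hc]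
        · rw [if_neg hc, if_neg hc, mul_zero]
    _ = ∑ T : Finset B, ∑ w : W, (if Cw w ⊆ T then
          ((-1 : ℝ) ^ cs.length w) * ((∏ i ∈ T, q i) * (∏ i ∈ Finset.univ \ T, (1 - q i)))
          else 0) := Finset.sum_comm
    _ = ∑ T : Finset B, (∑ w : W, (if Cw w ⊆ T then ((-1 : ℝ)) ^ cs.length w else 0))
          * ((∏ i ∈ T, q i) * (∏ i ∈ Finset.univ \ T, (1 - q i))) := by
        apply Finset.sum_congr rfl
        intro T _
        rw [Finset.sum_mul]
        apply Finset.sum_congr rfl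
        intro w _
        by_cases hc : Cw w ⊆ T
        · rw [if_pos hc, if_pos hc]
        · rw [if_neg hc, if_neg hc, zero_mul]
    _ = ∑ T : Finset B, (if T = ∅ then
          ((∏ i ∈ T, q i) * (∏ i ∈ Finset.univ \ T, (1 - q i))) else 0) := by
        apply Finset.sum_congr rfl
        intro T _
        rw [inner T]
        by_cases hc : T = ∅
        · rw [if_pos hc, if_pos hc, one_mul]
        · rw [if_neg hc, if_neg hc, zero_mul]
    _ = (∏ i ∈ (∅ : Finset B), q i) * (∏ i ∈ Finset.univ \ (∅ : Finset B), (1 - q i)) := by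
        rw [Finset.sum_ite_eq' Finset.univ (∅ : Finset B)]
        rw [if_pos (Finset.mem_univ _)]
    _ = ∏ i : B, (1 - q i) := by
        rw [Finset.prod_empty, one_mul, Finset.sdiff_empty]
end

section
/- The map σ ↦ σ̄ = {{i, 2n+1−σ(i)} : 1 ≤ i ≤ n} from the symmetric group 𝔖_n to pairpartitions of [2n] satisfies: |σ̄| (the number of crossings of the pairpartition σ̄) equals the Coxeter length of σ with respect to the adjacent transpositions, i.e., the number of inversions of σ. -/
/-- A pairpartition (perfect matching) of `{0, …, m-1}`, encoded as a fixed-point-free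
involution. -/
structure PairPartition (m : ℕ) where
  f : Fin m → Fin m
  invol : ∀ x, f (f x) = x
  nofix : ∀ x, f x ≠ x

/-- The number of crossings `|π|`: quadruples `a < b < c < d` with `{a,c}, {b,d} ∈ π`. -/
def PairPartition.crossings {m : ℕ} (π : PairPartition m) : ℕ :=
  (Finset.univ.filter fun p : Fin m × Fin m =>
    p.1 < p.2 ∧ p.2 < π.f p.1 ∧ π.f p.1 < π.f p.2).card

/-- The underlying function of the pairpartition `σ̄`, pairing `i` with `2n−1−σ(i)`
(`0`-indexed version of `{{i, 2n+1−σ(i)}}`). -/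
def barFun (n : ℕ) (σ : Equiv.Perm (Fin n)) (x : Fin (2 * n)) : Fin (2 * n) :=
  if h : (x : ℕ) < n then
    ⟨2 * n - 1 - (σ ⟨x, h⟩ : ℕ), by have := (σ ⟨x, h⟩).isLt; omega⟩
  else
    ⟨(σ.symm ⟨2 * n - 1 - (x : ℕ), by have := x.isLt; omega⟩ : ℕ), by
      have := (σ.symm ⟨2 * n - 1 - (x : ℕ), by have := x.isLt; omega⟩).isLt; omega⟩

/-- The pairpartition `σ̄ = {{i, 2n+1−σ(i)} : 1 ≤ i ≤ n}` associated to `σ ∈ 𝔖_n`. -/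
def bar (n : ℕ) (σ : Equiv.Perm (Fin n)) : PairPartition (2 * n) where
  f := barFun n σ
  invol := by
    intro x
    by_cases h : (x : ℕ) < n
    · have h1 : (σ ⟨x, h⟩ : ℕ) < n := (σ ⟨x, h⟩).isLt
      apply Fin.ext
      simp only [barFun, h, dif_pos, Fin.val_mk]
      have h2 : ¬ (2 * n - 1 - (σ ⟨x, h⟩ : ℕ) < n) := by omega
      rw [dif_neg h2]
      have e : (⟨2 * n - 1 - (2 * n - 1 - (σ ⟨x, h⟩ : ℕ)), by omega⟩ : Fin n)
          = σ ⟨x, h⟩ := by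
        apply Fin.ext
        simp only [Fin.val_mk]
        omega
      simp only [Fin.val_mk]
      rw [e, Equiv.symm_apply_apply]
    · have hx := x.isLt
      have h1 : ((σ.symm ⟨2 * n - 1 - (x : ℕ), by omega⟩ : Fin n) : ℕ) < n :=
        (σ.symm _).isLt
      apply Fin.ext
      simp only [barFun, dif_neg h]
      split
      next h2 =>
        simp only [Fin.eta, Equiv.apply_symm_apply, Fin.val_mk]
        omega
      next h2 => exact absurd h1 h2
  nofix := by
    intro x hx
    by_cases h : (x : ℕ) < n
    · have h1 : (σ ⟨x, h⟩ : ℕ) < n := (σ ⟨x, h⟩).isLt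
      have := congrArg Fin.val hx
      simp only [barFun, dif_pos h, Fin.val_mk] at this
      omega
    · have hx2 := x.isLt
      have h1 : ((σ.symm ⟨2 * n - 1 - (x : ℕ), by omega⟩ : Fin n) : ℕ) < n :=
        (σ.symm _).isLt
      have := congrArg Fin.val hx
      simp only [barFun, dif_neg h, Fin.val_mk] at this
      omega

/-- The number of inversions of a permutation. -/
def inversions {n : ℕ} (σ : Equiv.Perm (Fin n)) : ℕ :=
  (Finset.univ.filter fun p : Fin n × Fin n => p.1 < p.2 ∧ σ p.2 < σ p.1).card

lemma barFun_lt_val (n : ℕ) (σ : Equiv.Perm (Fin n)) (x : Fin (2*n)) (h : (x:ℕ) < n) :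
    ((bar n σ).f x : ℕ) = 2*n - 1 - (σ ⟨x, h⟩ : ℕ) := by
  simp [bar, barFun, h]

lemma barFun_ge_val (n : ℕ) (σ : Equiv.Perm (Fin n)) (x : Fin (2*n)) (h : ¬ (x:ℕ) < n) :
    ((bar n σ).f x : ℕ) < n := by
  simp only [bar, barFun, dif_neg h]
  exact (σ.symm _).isLt

lemma bar_val (n : ℕ) (σ : Equiv.Perm (Fin n)) (q : Fin n) (h : (q:ℕ) < 2*n) :
    ((bar n σ).f ⟨(q:ℕ), h⟩ : ℕ) = 2*n - 1 - (σ q : ℕ) := by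
  rw [barFun_lt_val n σ ⟨(q:ℕ), h⟩ q.isLt]

/-- The number of crossings of the pairpartition `σ̄` equals the Coxeter length
(= number of inversions) of `σ`. -/
theorem stmt_16 (n : ℕ) (σ : Equiv.Perm (Fin n)) :
    (bar n σ).crossings = inversions σ := by
  classical
  unfold PairPartition.crossings inversions
  apply Finset.card_bij' (i := fun (p : Fin (2*n) × Fin (2*n)) hp =>
      ((⟨(p.1 : ℕ), by
        simp only [Finset.mem_filter, Finset.mem_univ, true_and] at hp
        obtain ⟨h1, h2, h3⟩ := hp
        by_contra hc
        by_cases hc2 : (p.2 : ℕ) < n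
        · have h1' : (p.1 : ℕ) < (p.2 : ℕ) := h1
          omega
        · have := barFun_ge_val n σ p.2 hc2
          have := barFun_ge_val n σ p.1 hc
          omega⟩ : Fin n),
       (⟨(p.2 : ℕ), by
        simp only [Finset.mem_filter, Finset.mem_univ, true_and] at hp
        obtain ⟨h1, h2, h3⟩ := hp
        by_contra hc
        have hf2 := barFun_ge_val n σ p.2 hc
        by_cases hc1 : (p.1 : ℕ) < n
        · have := barFun_lt_val n σ p.1 hc1
          have := (σ ⟨p.1, hc1⟩).isLt
          omega
        · have := barFun_ge_val n σ p.1 hc1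
          have : (p.2 : ℕ) < n := by
            have hlt : ((bar n σ).f p.1 : ℕ) < n := barFun_ge_val n σ p.1 hc1
            have : (p.2 : ℕ) < ((bar n σ).f p.1 : ℕ) := h2
            omega
          exact hc this⟩ : Fin n)))
    (j := fun (q : Fin n × Fin n) hq =>
      ((⟨(q.1 : ℕ), by omega⟩ : Fin (2*n)), (⟨(q.2 : ℕ), by omega⟩ : Fin (2*n))))
  case hi =>
    intro p hp
    simp only [Finset.mem_filter, Finset.mem_univ, true_and] at hp ⊢
    obtain ⟨h1, h2, h3⟩ := hp
    -- establish p.1 < n and p.2 < n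
    have hp2 : (p.2 : ℕ) < n := by
      by_contra hc
      have hf2 := barFun_ge_val n σ p.2 hc
      by_cases hc1 : (p.1 : ℕ) < n
      · have := barFun_lt_val n σ p.1 hc1
        have := (σ ⟨p.1, hc1⟩).isLt
        omega
      · have := barFun_ge_val n σ p.1 hc1
        have h2' : (p.2 : ℕ) < ((bar n σ).f p.1 : ℕ) := h2
        omega
    have hp1 : (p.1 : ℕ) < n := lt_trans h1 hp2
    have e1 := barFun_lt_val n σ p.1 hp1
    have e2 := barFun_lt_val n σ p.2 hp2
    have h3' : ((bar n σ).f p.1 : ℕ) < ((bar n σ).f p.2 : ℕ) := h3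
    have hb1 := (σ ⟨p.1, hp1⟩).isLt
    have hb2 := (σ ⟨p.2, hp2⟩).isLt
    constructor
    · exact h1
    · show (σ _ : ℕ) < (σ _ : ℕ)
      have : (σ ⟨p.2, hp2⟩ : ℕ) < (σ ⟨p.1, hp1⟩ : ℕ) := by omega
      convert this using 3 <;> apply Fin.ext <;> rfl
  case hj =>
    intro q hq
    simp only [Finset.mem_filter, Finset.mem_univ, true_and] at hq ⊢
    obtain ⟨h1, h2⟩ := hq
    have hσ : (σ q.2 : ℕ) < (σ q.1 : ℕ) := h2
    have hσ1 := (σ q.1).isLt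
    have hσ2 := (σ q.2).isLt
    have hq2 : (q.2 : ℕ) < n := q.2.isLt
    have e1 := bar_val n σ q.1 (by omega)
    have e2 := bar_val n σ q.2 (by omega)
    refine ⟨h1, ?_, ?_⟩
    · rw [Fin.lt_def, e1]
      simp only [Fin.val_mk]
      omega
    · rw [Fin.lt_def, e1, e2]
      omega
  case left_inv =>
    intro p hp
    apply Prod.ext <;> apply Fin.ext <;> rfl
  case right_inv =>
    intro q hq
    apply Prod.ext <;> apply Fin.ext <;> rfl
end
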